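/- Let m, z₁, z₂ ∈ ℂ. The ℓ²-operator norm of the commutator [D, π(z₁,z₂)] = D·π(z₁,z₂) − π(z₁,z₂)·D equals |m| · |z₁ − z₂|. -/

import Mathlib

open Matrix
open scoped Matrix.Norms.L2Operator

/-- The Dirac operator of the two-point finite spectral triple. -/
noncomputable def Dir (m : ℂ) : Matrix (Fin 3) (Fin 3) ℂ :=
  !![0, m, starRingEnd ℂ m; starRingEnd ℂ m, 0, 0; m, 0, 0]

/-- The representation of the algebra `ℂ ⊕ ℂ` on `ℂ³`. -/
noncomputable def π' (z₁ z₂ : ℂ) : Matrix (Fin 3) (Fin 3) ℂ :=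
  Matrix.diagonal ![z₁, z₁, z₂]

lemma aux_mulVec (a b : ℂ) (v : Fin 3 → ℂ) :
    (!![0, 0, b; 0, 0, 0; a, 0, 0] : Matrix (Fin 3) (Fin 3) ℂ) *ᵥ v = ![b * v 2, 0, a * v 0] := by
  funext i
  fin_cases i <;> simp [Matrix.mulVec, dotProduct, Fin.sum_univ_three]

lemma aux_norm (a b : ℂ) (hab : ‖b‖ = ‖a‖) :
    ‖(!![0, 0, b; 0, 0, 0; a, 0, 0] : Matrix (Fin 3) (Fin 3) ℂ)‖ = ‖a‖ := by
  set C : Matrix (Fin 3) (Fin 3) ℂ := !![0, 0, b; 0, 0, 0; a, 0, 0] with hC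
  apply le_antisymm
  · rw [Matrix.l2_opNorm_def]
    apply ContinuousLinearMap.opNorm_le_bound _ (norm_nonneg a)
    intro x
    have hx : ((LinearEquiv.trans Matrix.toEuclideanLin
        LinearMap.toContinuousLinearMap C) x : EuclideanSpace ℂ (Fin 3)) =
        (WithLp.equiv 2 (Fin 3 → ℂ)).symm (C *ᵥ (WithLp.equiv 2 (Fin 3 → ℂ) x)) := by
      simp [Matrix.toEuclideanLin, Matrix.toLin'_apply, Matrix.toLpLin_apply]
    rw [hx, hC, aux_mulVec]
    rw [EuclideanSpace.norm_eq]
    have hnx : ‖x‖ = Real.sqrt (∑ i, ‖x i‖ ^ 2) := by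
      rw [EuclideanSpace.norm_eq]
    rw [hnx, ← Real.sqrt_sq (norm_nonneg a), ← Real.sqrt_mul (by positivity)]
    apply Real.sqrt_le_sqrt
    have h0 : WithLp.equiv 2 (Fin 3 → ℂ) x 0 = x 0 := rfl
    have h2 : WithLp.equiv 2 (Fin 3 → ℂ) x 2 = x 2 := rfl
    simp only [Fin.sum_univ_three]
    have e0 : ‖((WithLp.equiv 2 (Fin 3 → ℂ)).symm
        ![b * WithLp.equiv 2 (Fin 3 → ℂ) x 2, 0, a * WithLp.equiv 2 (Fin 3 → ℂ) x 0]
        : EuclideanSpace ℂ (Fin 3)) 0‖ = ‖b * x 2‖ := by rw [← h2]; rfl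
    have e1 : ‖((WithLp.equiv 2 (Fin 3 → ℂ)).symm
        ![b * WithLp.equiv 2 (Fin 3 → ℂ) x 2, 0, a * WithLp.equiv 2 (Fin 3 → ℂ) x 0]
        : EuclideanSpace ℂ (Fin 3)) 1‖ = 0 := by simp
    have e2 : ‖((WithLp.equiv 2 (Fin 3 → ℂ)).symm
        ![b * WithLp.equiv 2 (Fin 3 → ℂ) x 2, 0, a * WithLp.equiv 2 (Fin 3 → ℂ) x 0]
        : EuclideanSpace ℂ (Fin 3)) 2‖ = ‖a * x 0‖ := by rw [← h0]; rfl
    rw [e0, e1, e2, norm_mul, norm_mul, hab]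
    nlinarith [sq_nonneg ‖x 1‖, norm_nonneg a, sq_nonneg (‖a‖ * ‖x 1‖)]
  · have key := Matrix.l2_opNorm_mulVec C (EuclideanSpace.single 0 1)
    have hv : (C *ᵥ (EuclideanSpace.single (0 : Fin 3) (1 : ℂ) : EuclideanSpace ℂ (Fin 3)))
        = ![0, 0, a] := by
      rw [hC, aux_mulVec]
      have h0 : (EuclideanSpace.single (0 : Fin 3) (1 : ℂ) : EuclideanSpace ℂ (Fin 3)) 0 = 1 := by
        simp [EuclideanSpace.single_apply]
      have h2 : (EuclideanSpace.single (0 : Fin 3) (1 : ℂ) : EuclideanSpace ℂ (Fin 3)) 2 = 0 := by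
        simp [EuclideanSpace.single_apply]
      rw [show ((EuclideanSpace.single (0 : Fin 3) (1 : ℂ) : EuclideanSpace ℂ (Fin 3)) : Fin 3 → ℂ) 2
        = 0 from h2, show ((EuclideanSpace.single (0 : Fin 3) (1 : ℂ)
        : EuclideanSpace ℂ (Fin 3)) : Fin 3 → ℂ) 0 = 1 from h0]
      simp
    rw [hv] at key
    have hns : ‖(EuclideanSpace.single (0 : Fin 3) (1 : ℂ) : EuclideanSpace ℂ (Fin 3))‖ = 1 := by
      simp [EuclideanSpace.norm_single]
    rw [hns, mul_one] at key
    have hl : ‖((EuclideanSpace.equiv (Fin 3) ℂ).symm ![0, 0, a] : EuclideanSpace ℂ (Fin 3))‖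
        = ‖a‖ := by
      rw [EuclideanSpace.norm_eq]
      have e0 : ((EuclideanSpace.equiv (Fin 3) ℂ).symm ![0, 0, a] : EuclideanSpace ℂ (Fin 3)) 0
          = 0 := rfl
      have e1 : ((EuclideanSpace.equiv (Fin 3) ℂ).symm ![0, 0, a] : EuclideanSpace ℂ (Fin 3)) 1
          = 0 := rfl
      have e2 : ((EuclideanSpace.equiv (Fin 3) ℂ).symm ![0, 0, a] : EuclideanSpace ℂ (Fin 3)) 2
          = a := rfl
      rw [Fin.sum_univ_three, e0, e1, e2]
      simp [Real.sqrt_sq (norm_nonneg a)]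
    rw [hl] at key
    exact key

/-- **Norm of the commutator in the two-point spectral triple**: the ℓ²-operator norm of
`[D, π(z₁,z₂)]` equals `|m| · |z₁ − z₂|`. -/
theorem norm_commutator_two_point (m z₁ z₂ : ℂ) :
    ‖Dir m * π' z₁ z₂ - π' z₁ z₂ * Dir m‖ = ‖m‖ * ‖z₁ - z₂‖ := by
  have hπ : π' z₁ z₂ = !![z₁, 0, 0; 0, z₁, 0; 0, 0, z₂] := by
    ext i j
    fin_cases i <;> fin_cases j <;> simp [π', Matrix.diagonal, Matrix.vecHead, Matrix.vecTail]
  have hcomm : Dir m * π' z₁ z₂ - π' z₁ z₂ * Dir m =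
      !![0, 0, starRingEnd ℂ m * (z₂ - z₁); 0, 0, 0; m * (z₁ - z₂), 0, 0] := by
    rw [hπ, Dir, Matrix.mul_fin_three, Matrix.mul_fin_three]
    ext i j
    fin_cases i <;> fin_cases j <;> simp [Matrix.vecHead, Matrix.vecTail] <;> ring
  rw [hcomm, aux_norm (m * (z₁ - z₂)) (starRingEnd ℂ m * (z₂ - z₁))
    (by rw [norm_mul, norm_mul, RCLike.norm_conj,
          show z₂ - z₁ = -(z₁ - z₂) by ring, norm_neg]),
    norm_mul]
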